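/- For every C ∈ ℝ, the function u(x) = 1/(C e^x + ln(∫ -x e^{-C e^x} dx)), defined on an interval where the denominator is positive and the integral is positive, satisfies the second-order ODE u'' = (x u' - x u² + u²) e^{-1/u} + 2(u')²/u + u'. -/

import Mathlib

/-- `u(x) = 1/(C e^x + ln F(x))` where `F` is an antiderivative of `-x e^{-C e^x}`. -/
noncomputable def uEx4 (C : ℝ) (F : ℝ → ℝ) : ℝ → ℝ := fun x =>
  1 / (C * Real.exp x + Real.log (F x))

noncomputable def gAux (C : ℝ) (F : ℝ → ℝ) : ℝ → ℝ := fun x =>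
  C * Real.exp x + Real.log (F x)

noncomputable def g1Aux (C : ℝ) (F : ℝ → ℝ) : ℝ → ℝ := fun x =>
  C * Real.exp x - x * Real.exp (-(gAux C F x))

noncomputable def g2Aux (C : ℝ) (F : ℝ → ℝ) : ℝ → ℝ := fun x =>
  C * Real.exp x - (Real.exp (-(gAux C F x)) + x * (-(g1Aux C F x) * Real.exp (-(gAux C F x))))

noncomputable def u1Aux (C : ℝ) (F : ℝ → ℝ) : ℝ → ℝ := fun x =>
  -(g1Aux C F x) / (gAux C F x) ^ 2

theorem stmt_12 (C : ℝ) (F : ℝ → ℝ) (s : Set ℝ) (hs : IsOpen s)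
    (hF : ∀ x ∈ s, HasDerivAt F (-x * Real.exp (-C * Real.exp x)) x)
    (hFpos : ∀ x ∈ s, F x > 0)
    (hden : ∀ x ∈ s, C * Real.exp x + Real.log (F x) > 0) :
    ∀ x ∈ s, deriv (deriv (uEx4 C F)) x =
      (x * deriv (uEx4 C F) x - x * (uEx4 C F x) ^ 2 + (uEx4 C F x) ^ 2) *
          Real.exp (-1 / uEx4 C F x) +
        2 * (deriv (uEx4 C F) x) ^ 2 / uEx4 C F x + deriv (uEx4 C F) x := by
  -- basic facts
  have hgpos : ∀ x ∈ s, gAux C F x > 0 := fun x hx => hden x hx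
  have hgne : ∀ x ∈ s, gAux C F x ≠ 0 := fun x hx => ne_of_gt (hgpos x hx)
  -- exp(-(g x)) = exp(-C e^x)/F x
  have hEeq : ∀ x ∈ s, Real.exp (-(gAux C F x)) = Real.exp (-C * Real.exp x) / F x := by
    intro x hx
    have : -(gAux C F x) = (-C * Real.exp x) + (-(Real.log (F x))) := by
      simp [gAux]; ring
    rw [this, Real.exp_add, Real.exp_neg, Real.exp_log (hFpos x hx)]
    ring
  -- derivative of g
  have hg : ∀ x ∈ s, HasDerivAt (gAux C F) (g1Aux C F x) x := by
    intro x hx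
    have h1 : HasDerivAt (fun y => C * Real.exp y) (C * Real.exp x) x :=
      (Real.hasDerivAt_exp x).const_mul C
    have h2 : HasDerivAt (fun y => Real.log (F y))
        ((-x * Real.exp (-C * Real.exp x)) / F x) x :=
      (hF x hx).log (ne_of_gt (hFpos x hx))
    have := h1.add h2
    refine this.congr_deriv ?_
    simp only [g1Aux]
    rw [hEeq x hx]
    ring
  -- derivative of g1
  have hg1 : ∀ x ∈ s, HasDerivAt (g1Aux C F) (g2Aux C F x) x := by
    intro x hx
    have h1 : HasDerivAt (fun y => C * Real.exp y) (C * Real.exp x) x :=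
      (Real.hasDerivAt_exp x).const_mul C
    have hE : HasDerivAt (fun y => Real.exp (-(gAux C F y)))
        (Real.exp (-(gAux C F x)) * (-(g1Aux C F x))) x := ((hg x hx).neg).exp
    have hxE : HasDerivAt (fun y => y * Real.exp (-(gAux C F y)))
        (1 * Real.exp (-(gAux C F x)) + x * (Real.exp (-(gAux C F x)) * (-(g1Aux C F x)))) x :=
      (hasDerivAt_id x).mul hE
    have := h1.sub hxE
    refine this.congr_deriv ?_
    simp only [g2Aux]
    ring
  -- u = 1/g, derivative u1
  have hu : ∀ x ∈ s, HasDerivAt (uEx4 C F) (u1Aux C F x) x := by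
    intro x hx
    have := (hg x hx).inv (hgne x hx)
    have heq : uEx4 C F = fun y => (gAux C F y)⁻¹ := by
      funext y; simp [uEx4, gAux, one_div]
    rw [heq]
    exact this
  intro x hx
  -- derivative of u1 at x
  have hu1 : HasDerivAt (u1Aux C F)
      ((-(g2Aux C F x) * (gAux C F x) ^ 2 -
        -(g1Aux C F x) * ((2 : ℕ) * (gAux C F x) ^ 1 * g1Aux C F x)) / ((gAux C F x) ^ 2) ^ 2) x := by
    have hd : HasDerivAt (fun y => (gAux C F y) ^ 2)
        ((2 : ℕ) * (gAux C F x) ^ 1 * g1Aux C F x) x := (hg x hx).pow 2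
    have hn : HasDerivAt (fun y => -(g1Aux C F y)) (-(g2Aux C F x)) x := (hg1 x hx).neg
    exact hn.div hd (pow_ne_zero 2 (hgne x hx))
  -- deriv u = u1 near x
  have hev : deriv (uEx4 C F) =ᶠ[nhds x] u1Aux C F := by
    filter_upwards [hs.mem_nhds hx] with y hy
    exact (hu y hy).deriv
  have hdd : deriv (deriv (uEx4 C F)) x = deriv (u1Aux C F) x := hev.deriv_eq
  rw [hdd, hu1.deriv, (hu x hx).deriv]
  have hune : uEx4 C F x = 1 / gAux C F x := rfl
  have hexp : Real.exp (-1 / uEx4 C F x) = Real.exp (-(gAux C F x)) := by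
    rw [hune]
    congr 1
    field_simp
  rw [hexp, hune]
  simp only [u1Aux, g2Aux, g1Aux]
  have hne := hgne x hx
  field_simp
  ring
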